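/- Let U : H_S → H_{A₁} ⊗ ⋯ ⊗ H_{A_l} be an isometry, let ρ be a state on H_S, and let σ be a separable state on H_{A₁} ⊗ ⋯ ⊗ H_{A_l} with ‖U ρ U† − σ‖₁ ≤ δ. Then there exist unit vectors ψ ∈ H_S and φ_i ∈ H_{A_i} (i = 1,…,l) such that ‖U |ψ⟩⟨ψ| U† − |φ₁⟩⟨φ₁| ⊗ ⋯ ⊗ |φ_l⟩⟨φ_l|‖₁ ≤ 4√δ. -/

import Mathlib

open scoped Kronecker ComplexOrder
open Matrix

/-- The positive semidefinite square root (removed from Mathlib; restored with its old definition). -/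
noncomputable def Matrix.PosSemidef.sqrt {n 𝕜 : Type*} [Fintype n] [DecidableEq n] [RCLike 𝕜]
    {A : Matrix n n 𝕜} (hA : A.PosSemidef) : Matrix n n 𝕜 :=
  (hA.1.eigenvectorUnitary : Matrix n n 𝕜) * diagonal ((↑) ∘ (√·) ∘ hA.1.eigenvalues) *
    (star hA.1.eigenvectorUnitary : Matrix n n 𝕜)

/-- The trace norm (Schatten 1-norm) of a complex matrix: `Tr √(Xᴴ X)`. -/
noncomputable def traceNorm {n : Type*} [Fintype n] [DecidableEq n] (X : Matrix n n ℂ) : ℝ :=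
  ((Matrix.posSemidef_conjTranspose_mul_self X).sqrt.trace).re

/-- A quantum state: a positive semidefinite matrix with unit trace. -/
def IsState {n : Type*} [Fintype n] (ρ : Matrix n n ℂ) : Prop :=
  ρ.PosSemidef ∧ ρ.trace = 1

/-- The tensor product `N 0 ⊗ ⋯ ⊗ N (l-1)` of a family of square matrices, acting on
the tensor product space indexed by dependent functions. -/
def tensorFamily {l : ℕ} {A : Fin l → Type*}
    (N : ∀ i, Matrix (A i) (A i) ℂ) : Matrix (∀ i, A i) (∀ i, A i) ℂ :=
  Matrix.of fun x y => ∏ i, N i (x i) (y i)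

/-- A multipartite separable state across the cut `A₁ : ⋯ : A_l`: a finite convex
combination of tensor products of states. -/
def SeparableFamilyState {l : ℕ} {A : Fin l → Type*} [∀ i, Fintype (A i)]
    (σ : Matrix (∀ i, A i) (∀ i, A i) ℂ) : Prop :=
  ∃ (m : ℕ) (p : Fin m → ℝ) (τ : ∀ _ : Fin m, ∀ i, Matrix (A i) (A i) ℂ),
    (∀ y, 0 ≤ p y) ∧ (∑ y, p y = 1) ∧ (∀ y i, IsState (τ y i)) ∧
    σ = ∑ y, (p y : ℂ) • tensorFamily (τ y)

/-- Insert a value at coordinate `i₀` into an assignment of the remaining coordinates. -/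
def insertAt {l : ℕ} {A : Fin l → Type*} (i₀ : Fin l) (a : A i₀)
    (w : ∀ j : {j : Fin l // j ≠ i₀}, A j.1) : ∀ j, A j :=
  fun j => if h : j = i₀ then cast (congrArg A h).symm a else w ⟨j, h⟩

/-- Partial trace of a multipartite operator onto the `i₀`-th tensor factor
(tracing out all other factors). -/
noncomputable def ptraceAt {l : ℕ} {A : Fin l → Type*} [∀ i, Fintype (A i)]
    [∀ i, DecidableEq (A i)] (i₀ : Fin l)
    (X : Matrix (∀ j, A j) (∀ j, A j) ℂ) : Matrix (A i₀) (A i₀) ℂ :=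
  Matrix.of fun a a' =>
    ∑ w : ∀ j : {j : Fin l // j ≠ i₀}, A j.1, X (insertAt i₀ a w) (insertAt i₀ a' w)

/-- The multipartite one-way LOCC norm of an operator on `H_{A₁} ⊗ ⋯ ⊗ H_{A_l}`,
with distinguished (receiving) party `i₀`: the supremum over finite POVMs
`{Λ^{(i)}_{m_i}}` on each `H_{A_i}`, `i ≠ i₀`, of
`Σ_{m} ‖Tr_{rest}((I_{A_{i₀}} ⊗ ⊗_{i ≠ i₀} Λ^{(i)}_{m_i}) X)‖₁`. -/
noncomputable def oneWayLOCCNormFam {l : ℕ} {A : Fin l → Type*} [∀ i, Fintype (A i)]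
    [∀ i, DecidableEq (A i)] (i₀ : Fin l)
    (X : Matrix (∀ i, A i) (∀ i, A i) ℂ) : ℝ :=
  sSup { r : ℝ | ∃ (M : Fin l → ℕ) (Λ : ∀ i, Fin (M i) → Matrix (A i) (A i) ℂ),
    M i₀ = 1 ∧ (∀ m, Λ i₀ m = 1) ∧
    (∀ i, i ≠ i₀ → ∀ m, (Λ i m).PosSemidef) ∧
    (∀ i, i ≠ i₀ → ∑ m, Λ i m = 1) ∧
    r = ∑ m : ∀ i, Fin (M i),
      traceNorm (ptraceAt i₀ (tensorFamily (fun i => Λ i (m i)) * X)) }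

/-- `k`-extendibility of a multipartite state `ρ` on `H_{A₁} ⊗ ⋯ ⊗ H_{A_l}` (with
respect to the cut `A₁ : ⋯ : A_l`): there is a state `ω` on `⊗_i H_{A_i}^{⊗k}`
invariant under every permutation of the `k` copies within each group, whose partial
trace over all but the first copy in each group equals `ρ`. -/
def KExtendible {l : ℕ} {A : Fin l → Type*} [∀ i, Fintype (A i)]
    (k : ℕ) (hk : 0 < k) (ρ : Matrix (∀ i, A i) (∀ i, A i) ℂ) : Prop :=
  ∃ ω : Matrix (∀ i, Fin k → A i) (∀ i, Fin k → A i) ℂ,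
    IsState ω ∧
    (∀ π : ∀ _ : Fin l, Equiv.Perm (Fin k), ∀ x y : ∀ i, Fin k → A i,
      ω (fun i j => x i (π i j)) (fun i j => y i (π i j)) = ω x y) ∧
    (∀ x y : ∀ i, A i, ρ x y =
      ∑ w : ∀ i : Fin l, {j : Fin k // j ≠ ⟨0, hk⟩} → A i,
        ω (fun i j => if h : j = ⟨0, hk⟩ then x i else w i ⟨j, h⟩)
          (fun i j => if h : j = ⟨0, hk⟩ then y i else w i ⟨j, h⟩))

/-- The outer product `|v⟩⟨v|`. -/
def outer {n : Type*} (v : n → ℂ) : Matrix n n ℂ :=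
  Matrix.of fun i j => v i * star (v j)

/-- A unit vector. -/
def IsUnitVec {n : Type*} [Fintype n] (v : n → ℂ) : Prop :=
  ∑ i, star (v i) * v i = 1

/-! ### Auxiliary lemmas -/

section Aux

open scoped MatrixOrder in
lemma Matrix.PosSemidef.eq_sqrt_of_sq_eq {n : Type*} [Fintype n] [DecidableEq n]
    {A : Matrix n n ℂ} (hA : A.PosSemidef) {B : Matrix n n ℂ} (hB : B.PosSemidef)
    (hAB : A ^ 2 = B) : A = hB.sqrt := by
  have h1 : hB.sqrt = CFC.sqrt B := by
    rw [CFC.sqrt_eq_cfc, cfc_nnreal_eq_real _ B, hB.1.cfc_eq]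
    simp only [IsHermitian.cfc, Matrix.PosSemidef.sqrt]
    congr 3
    funext i
    simp [Function.comp, max_eq_left (hB.eigenvalues_nonneg i)]
  rw [h1]
  exact (CFC.sqrt_unique (by rw [← hAB, sq]) hA.nonneg).symm

lemma psd_diag_nonneg {n : Type*} [Fintype n] [DecidableEq n] {M : Matrix n n ℂ}
    (hM : M.PosSemidef) (i : n) : 0 ≤ M i i := by
  exact hM.diag_nonneg

lemma trace_mul_diag {n : Type*} [Fintype n] [DecidableEq n] (M : Matrix n n ℂ) (d : n → ℂ) :
    (M * Matrix.diagonal d).trace = ∑ i, M i i * d i := by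
  simp [Matrix.trace, Matrix.diag, Matrix.mul_diagonal]

lemma conj_diag_mul {n : Type*} [Fintype n] [DecidableEq n] {V : Matrix n n ℂ}
    (hVV : star V * V = 1) (d e : n → ℂ) :
    (V * Matrix.diagonal d * star V) * (V * Matrix.diagonal e * star V)
      = V * Matrix.diagonal (fun i => d i * e i) * star V := by
  calc (V * Matrix.diagonal d * star V) * (V * Matrix.diagonal e * star V)
      = V * (Matrix.diagonal d * ((star V * V) * (Matrix.diagonal e * star V))) := by
        simp only [Matrix.mul_assoc]
    _ = V * Matrix.diagonal (fun i => d i * e i) * star V := by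
        rw [hVV, Matrix.one_mul, ← Matrix.mul_assoc (Matrix.diagonal d),
          Matrix.diagonal_mul_diagonal, Matrix.mul_assoc]

lemma traceNorm_hermitian {n : Type*} [Fintype n] [DecidableEq n] {T : Matrix n n ℂ}
    (hT : T.IsHermitian) : traceNorm T = ∑ i, |hT.eigenvalues i| := by
  set V : Matrix n n ℂ := (hT.eigenvectorUnitary : Matrix n n ℂ) with hVdef
  have hVV : star V * V = 1 := (hT.eigenvectorUnitary).2.1
  have hspec : T = V * Matrix.diagonal (Complex.ofReal ∘ hT.eigenvalues) * star V :=
    hT.spectral_theorem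
  set B : Matrix n n ℂ := V * Matrix.diagonal (fun i => (Complex.ofReal |hT.eigenvalues i|)) * star V with hBdef
  have hBpsd : B.PosSemidef := by
    have hd : (Matrix.diagonal (fun i => (Complex.ofReal |hT.eigenvalues i|))).PosSemidef := by
      refine Matrix.posSemidef_diagonal_iff.mpr fun i => ?_
      exact Complex.zero_le_real.mpr (abs_nonneg _)
    simpa [hBdef, Matrix.star_eq_conjTranspose] using hd.mul_mul_conjTranspose_same V
  have hB2 : B ^ 2 = Tᴴ * T := by
    rw [hT.eq, pow_two]
    conv_rhs => rw [hspec]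
    rw [hBdef, conj_diag_mul hVV, conj_diag_mul hVV]
    congr 1
    congr 1
    ext i
    simp [← Complex.ofReal_mul, abs_mul_abs_self]
  have hsqrt : B = (Matrix.posSemidef_conjTranspose_mul_self T).sqrt :=
    hBpsd.eq_sqrt_of_sq_eq _ hB2
  rw [traceNorm, ← hsqrt, hBdef]
  rw [Matrix.trace_mul_comm, ← Matrix.mul_assoc, hVV, Matrix.one_mul, Matrix.trace_diagonal]
  simp

lemma re_trace_contraction_le {n : Type*} [Fintype n] [DecidableEq n]
    {Q T : Matrix n n ℂ} (hQ : Q.PosSemidef) (hQ1 : (1 - Q).PosSemidef)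
    (hT : T.IsHermitian) : ((Q * T).trace).re ≤ traceNorm T := by
  rw [traceNorm_hermitian hT]
  set V : Matrix n n ℂ := (hT.eigenvectorUnitary : Matrix n n ℂ) with hVdef
  have hVV : star V * V = 1 := (hT.eigenvectorUnitary).2.1
  have hspec : T = V * Matrix.diagonal (Complex.ofReal ∘ hT.eigenvalues) * star V :=
    hT.spectral_theorem
  set R : Matrix n n ℂ := star V * Q * V with hRdef
  have hRpsd : R.PosSemidef := by
    simpa [hRdef, Matrix.star_eq_conjTranspose] using hQ.conjTranspose_mul_mul_same (Vᴴᴴ)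
  have hR1psd : (1 - R).PosSemidef := by
    have : (1 : Matrix n n ℂ) - R = star V * (1 - Q) * V := by
      rw [Matrix.mul_sub, Matrix.sub_mul, Matrix.mul_one, hVV]
    rw [this]
    simpa [Matrix.star_eq_conjTranspose] using hQ1.conjTranspose_mul_mul_same (Vᴴᴴ)
  have key : (Q * T).trace = ∑ i, R i i * (hT.eigenvalues i : ℂ) := by
    conv_lhs => rw [hspec]
    rw [← Matrix.mul_assoc, ← Matrix.mul_assoc, Matrix.trace_mul_comm, ← Matrix.mul_assoc,
      ← Matrix.mul_assoc, ← hRdef, trace_mul_diag]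
    simp [Function.comp]
  rw [key]
  rw [Complex.re_sum]
  refine Finset.sum_le_sum fun i _ => ?_
  have h0 : 0 ≤ (R i i).re := by
    have := psd_diag_nonneg hRpsd i
    rw [Complex.le_def] at this; exact this.1
  have h1 : (R i i).re ≤ 1 := by
    have := psd_diag_nonneg hR1psd i
    rw [Complex.le_def] at this
    have := this.1
    simp only [Matrix.sub_apply, Matrix.one_apply_eq, Complex.sub_re, Complex.one_re,
      Complex.zero_re] at this
    linarith
  have : (R i i * (hT.eigenvalues i : ℂ)).re = (R i i).re * hT.eigenvalues i := by
    simp [Complex.mul_re]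
  rw [this]
  rcases le_or_gt 0 (hT.eigenvalues i) with h | h
  · calc (R i i).re * hT.eigenvalues i ≤ 1 * hT.eigenvalues i := by nlinarith
    _ ≤ |hT.eigenvalues i| := by rw [one_mul]; exact le_abs_self _
  · calc (R i i).re * hT.eigenvalues i ≤ 0 := by nlinarith
    _ ≤ |hT.eigenvalues i| := abs_nonneg _

/-- `|u⟩⟨v|` -/
def ketbra {n : Type*} (u v : n → ℂ) : Matrix n n ℂ :=
  Matrix.of fun x y => u x * star (v y)

lemma outer_eq_ketbra {n : Type*} (v : n → ℂ) : outer v = ketbra v v := rfl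

lemma ketbra_mul_ketbra {n : Type*} [Fintype n] (u v w z : n → ℂ) :
    ketbra u v * ketbra w z = (∑ k, star (v k) * w k) • ketbra u z := by
  ext x y
  simp only [ketbra, Matrix.mul_apply, Matrix.of_apply, Matrix.smul_apply, smul_eq_mul,
    Finset.sum_mul]
  exact Finset.sum_congr rfl fun k _ => by ring

lemma trace_ketbra {n : Type*} [Fintype n] (u v : n → ℂ) :
    (ketbra u v).trace = star (∑ x, star (u x) * v x) := by
  simp [ketbra, Matrix.trace, Matrix.diag, star_sum, mul_comm]

lemma smul_psd {n : Type*} [Fintype n] {M : Matrix n n ℂ} (hM : M.PosSemidef) (c : ℝ) (hc : 0 ≤ c) :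
    ((c:ℂ) • M).PosSemidef := by
  constructor
  · unfold Matrix.IsHermitian
    rw [Matrix.conjTranspose_smul, hM.1.eq]
    norm_num
  · exact (hM.smul (a := (c:ℂ)) (by exact_mod_cast hc)).2

lemma ketbra_herm {n : Type*} (u v : n → ℂ) : (ketbra u v)ᴴ = ketbra v u := by
  ext x y
  simp [ketbra, Matrix.conjTranspose_apply, mul_comm]

lemma traceNorm_zero {n : Type*} [Fintype n] [DecidableEq n] :
    traceNorm (0 : Matrix n n ℂ) = 0 := by
  have h : (0 : Matrix n n ℂ) = (Matrix.posSemidef_conjTranspose_mul_self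
      (0 : Matrix n n ℂ)).sqrt := Matrix.PosSemidef.zero.eq_sqrt_of_sq_eq _ (by simp)
  rw [traceNorm, ← h]
  simp

lemma traceNorm_outer_sub_outer {n : Type*} [Fintype n] [DecidableEq n]
    (a b : n → ℂ) (ha : IsUnitVec a) (hb : IsUnitVec b) (s : ℝ)
    (hs : ∑ k, star (a k) * b k = (s:ℂ)) (hs1 : s^2 ≤ 1) :
    traceNorm (outer a - outer b) = 2 * Real.sqrt (1 - s^2) := by
  unfold IsUnitVec at ha hb
  have sba : ∑ k, star (b k) * a k = (s:ℂ) := by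
    have h := congrArg star hs
    rw [star_sum] at h
    simp only [StarMul.star_mul, star_star] at h
    rw [h, Complex.star_def, Complex.conj_ofReal]
  set X : Matrix n n ℂ := outer a - outer b with hXdef
  have hX2 : X * X = ketbra a a + ketbra b b - (s:ℂ) • ketbra a b - (s:ℂ) • ketbra b a := by
    rw [hXdef, outer_eq_ketbra, outer_eq_ketbra, sub_mul, mul_sub, mul_sub,
      ketbra_mul_ketbra, ketbra_mul_ketbra, ketbra_mul_ketbra, ketbra_mul_ketbra,
      ha, hb, hs, sba]
    module
  have hX3 : X * (X * X) = ((1 - s^2 : ℝ):ℂ) • X := by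
    rw [hX2, hXdef, outer_eq_ketbra, outer_eq_ketbra]
    rw [sub_mul]
    simp only [Matrix.mul_sub, Matrix.mul_add, Matrix.mul_smul,
      ketbra_mul_ketbra, ha, hb, hs, sba]
    push_cast
    module
  have hherm : Xᴴ = X := by
    rw [hXdef, outer_eq_ketbra, outer_eq_ketbra, Matrix.conjTranspose_sub,
      ketbra_herm, ketbra_herm]
  have htr : (X * X).trace = ((2 - 2*s^2 : ℝ):ℂ) := by
    rw [hX2]
    simp only [Matrix.trace_sub, Matrix.trace_add, Matrix.trace_smul, trace_ketbra,
      ha, hb, hs, sba]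
    simp [Complex.star_def, Complex.conj_ofReal]
    push_cast
    ring
  rcases lt_or_eq_of_le hs1 with h | h
  · set r : ℝ := Real.sqrt (1 - s^2) with hrdef
    have hr : 0 < r := Real.sqrt_pos.mpr (by linarith)
    have hr2 : r^2 = 1 - s^2 := Real.sq_sqrt (by linarith)
    have hXXpsd : (X * X).PosSemidef := by
      have h0 := Matrix.posSemidef_conjTranspose_mul_self X
      rwa [hherm] at h0
    set B : Matrix n n ℂ := ((r⁻¹ : ℝ):ℂ) • (X * X) with hBdef
    have hBpsd : B.PosSemidef := smul_psd hXXpsd _ (by positivity)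
    have h4 : (X * X) * (X * X) = ((1 - s^2:ℝ):ℂ) • (X * X) := by
      calc (X * X) * (X * X) = X * (X * (X * X)) := by rw [mul_assoc]
      _ = X * (((1 - s^2:ℝ):ℂ) • X) := by rw [hX3]
      _ = ((1 - s^2:ℝ):ℂ) • (X * X) := by rw [Matrix.mul_smul]
    have hB2 : B ^ 2 = Xᴴ * X := by
      rw [hherm, pow_two, hBdef, Matrix.smul_mul, Matrix.mul_smul, h4, smul_smul, smul_smul]
      have hc : ((r⁻¹ : ℝ):ℂ) * ((r⁻¹ : ℝ):ℂ) * ((1 - s^2:ℝ):ℂ) = 1 := by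
        rw [← Complex.ofReal_mul, ← Complex.ofReal_mul, ← hr2]
        norm_cast
        field_simp
      rw [hc, one_smul]
    have hsqrt : B = (Matrix.posSemidef_conjTranspose_mul_self X).sqrt :=
      hBpsd.eq_sqrt_of_sq_eq _ hB2
    rw [traceNorm, ← hsqrt, hBdef, Matrix.trace_smul, htr]
    rw [smul_eq_mul, ← Complex.ofReal_mul, Complex.ofReal_re]
    rw [show (2 - 2*s^2) = 2 * r^2 by rw [hr2]; ring]
    field_simp
  · -- s^2 = 1 : X = 0
    have h0 : X * (X * X) = 0 := by rw [hX3, ← h]; simp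
    have h5 : (X * X) * (X * X) = 0 := by
      calc (X * X) * (X * X) = X * (X * (X * X)) := by rw [mul_assoc]
      _ = 0 := by rw [h0, mul_zero]
    have hXX : X * X = 0 := by
      have : (X * X)ᴴ * (X * X) = 0 := by
        rw [Matrix.conjTranspose_mul, hherm, h5]
      exact Matrix.conjTranspose_mul_self_eq_zero.mp this
    have hX0 : X = 0 := by
      have : Xᴴ * X = 0 := by rw [hherm, hXX]
      exact Matrix.conjTranspose_mul_self_eq_zero.mp this
    rw [hX0, traceNorm_zero, ← h]
    simp

lemma exists_ge_weighted {ι : Type*} [Fintype ι] (p c : ι → ℝ) (hp : ∀ i, 0 ≤ p i)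
    (hps : ∑ i, p i = 1) (t : ℝ) (h : t ≤ ∑ i, p i * c i) : ∃ i, t ≤ c i := by
  by_contra hc
  push_neg at hc
  obtain ⟨i0, hi0⟩ : ∃ i, 0 < p i := by
    by_contra hz
    push_neg at hz
    have : ∑ i, p i = 0 :=
      Finset.sum_eq_zero fun i _ => le_antisymm (hz i) (hp i)
    rw [this] at hps; norm_num at hps
  have hstrict : ∑ i, p i * c i < ∑ i, p i * t :=
    Finset.sum_lt_sum (fun i _ => mul_le_mul_of_nonneg_left (hc i).le (hp i))
      ⟨i0, Finset.mem_univ _, mul_lt_mul_of_pos_left (hc i0) hi0⟩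
  rw [← Finset.sum_mul, hps, one_mul] at hstrict
  linarith

lemma state_decomp {n : Type*} [Fintype n] [DecidableEq n] {τ : Matrix n n ℂ}
    (hτ : IsState τ) :
    ∃ (μ : n → ℝ) (v : n → n → ℂ), (∀ k, 0 ≤ μ k) ∧ (∑ k, μ k = 1) ∧
      (∀ k, IsUnitVec (v k)) ∧
      ∀ x y, τ x y = ∑ k, (μ k : ℂ) * (v k x * star (v k y)) := by
  have hH : τ.IsHermitian := hτ.1.1
  set V : Matrix n n ℂ := (hH.eigenvectorUnitary : Matrix n n ℂ) with hVdef
  have hVV : star V * V = 1 := (hH.eigenvectorUnitary).2.1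
  have hspec : τ = V * Matrix.diagonal (Complex.ofReal ∘ hH.eigenvalues) * star V :=
    hH.spectral_theorem
  refine ⟨hH.eigenvalues, fun k x => V x k, fun k => hτ.1.eigenvalues_nonneg k, ?_, ?_, ?_⟩
  · have htr : τ.trace = ∑ k, (hH.eigenvalues k : ℂ) := by
      conv_lhs => rw [hspec]
      rw [Matrix.trace_mul_comm, ← Matrix.mul_assoc, hVV, Matrix.one_mul,
        Matrix.trace_diagonal]
      simp
    rw [hτ.2] at htr
    have : ((∑ k, hH.eigenvalues k : ℝ) : ℂ) = 1 := by push_cast; rw [← htr]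
    exact_mod_cast this
  · intro k
    have := congrFun (congrFun hVV k) k
    simp only [Matrix.mul_apply, Matrix.one_apply_eq, Matrix.star_apply] at this
    simpa [IsUnitVec, Matrix.star_eq_conjTranspose, Matrix.conjTranspose_apply] using this
  · intro x y
    conv_lhs => rw [hspec]
    rw [Matrix.mul_apply]
    refine Finset.sum_congr rfl fun k _ => ?_
    rw [Matrix.mul_diagonal, Matrix.star_apply]
    simp only [Function.comp_apply]
    ring

lemma tensor_outer {l : ℕ} {A : Fin l → Type*} [∀ i, Fintype (A i)]
    (φ : ∀ i, A i → ℂ) :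
    tensorFamily (fun i => outer (φ i)) = outer (fun x => ∏ i, φ i (x i)) := by
  ext x y
  simp [tensorFamily, outer, Finset.prod_mul_distrib]

lemma unit_prod {l : ℕ} {A : Fin l → Type*} [∀ i, Fintype (A i)]
    (φ : ∀ i, A i → ℂ) (h : ∀ i, IsUnitVec (φ i)) :
    IsUnitVec (fun x : ∀ i, A i => ∏ i, φ i (x i)) := by
  unfold IsUnitVec at *
  have : ∀ x : ∀ i, A i, star (∏ i, φ i (x i)) * ∏ i, φ i (x i)
      = ∏ i, (star (φ i (x i)) * φ i (x i)) := by
    intro x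
    rw [star_prod, ← Finset.prod_mul_distrib]
  simp_rw [this]
  rw [← Fintype.prod_sum fun i a => star (φ i a) * φ i a]
  exact Finset.prod_eq_one fun i _ => h i

lemma trace_mul_outer {n : Type*} [Fintype n] (Q : Matrix n n ℂ) (v : n → ℂ) :
    (Q * outer v).trace = dotProduct (star v) (Q *ᵥ v) := by
  simp only [Matrix.trace, Matrix.diag, Matrix.mul_apply, outer, Matrix.of_apply,
    dotProduct, Matrix.mulVec, Pi.star_apply]
  refine Finset.sum_congr rfl fun y _ => ?_
  rw [Finset.mul_sum]
  refine Finset.sum_congr rfl fun x _ => ?_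
  ring

lemma conj_outer {m n : Type*} [Fintype m] [Fintype n] (U : Matrix m n ℂ) (ψ : n → ℂ) :
    U * outer ψ * Uᴴ = outer (U *ᵥ ψ) := by
  ext x y
  simp only [Matrix.mul_apply, outer, Matrix.of_apply, Matrix.conjTranspose_apply,
    Matrix.mulVec, dotProduct, star_sum, StarMul.star_mul, Finset.sum_mul,
    Finset.mul_sum]
  refine Finset.sum_congr rfl fun s _ => Finset.sum_congr rfl fun t _ => ?_
  ring

lemma inner_mulVec {m n : Type*} [Fintype m] [Fintype n] (U : Matrix m n ℂ)
    (ψ : n → ℂ) (φ : m → ℂ) :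
    ∑ x, star ((U *ᵥ ψ) x) * φ x = ∑ s, star (ψ s) * (∑ x, star (U x s) * φ x) := by
  simp only [Matrix.mulVec, dotProduct, star_sum, StarMul.star_mul,
    Finset.sum_mul, Finset.mul_sum]
  rw [Finset.sum_comm]
  refine Finset.sum_congr rfl fun s _ => Finset.sum_congr rfl fun x _ => ?_
  ring

lemma mulVec_unit {m n : Type*} [Fintype m] [Fintype n] [DecidableEq n]
    {U : Matrix m n ℂ} (hU : Uᴴ * U = 1) {ψ : n → ℂ} (hψ : IsUnitVec ψ) :
    IsUnitVec (U *ᵥ ψ) := by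
  unfold IsUnitVec at *
  rw [inner_mulVec]
  have h1 : ∀ s, (∑ x, star (U x s) * (U *ᵥ ψ) x) = ψ s := by
    intro s
    have h2 : ∀ t, ∑ x, star (U x s) * U x t = (1 : Matrix n n ℂ) s t := by
      intro t
      rw [← hU, Matrix.mul_apply]
      simp [Matrix.conjTranspose_apply]
    simp only [Matrix.mulVec, dotProduct, Finset.mul_sum]
    rw [Finset.sum_comm]
    calc ∑ t, ∑ x, star (U x s) * (U x t * ψ t)
        = ∑ t, (∑ x, star (U x s) * U x t) * ψ t := by
          refine Finset.sum_congr rfl fun t _ => ?_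
          rw [Finset.sum_mul]
          exact Finset.sum_congr rfl fun x _ => by ring
      _ = ∑ t, (1 : Matrix n n ℂ) s t * ψ t := by simp_rw [h2]
      _ = ψ s := by simp [Matrix.one_apply]
  simp_rw [h1]
  exact hψ

lemma dot_self_mulVec {m n : Type*} [Fintype m] [Fintype n] (U : Matrix m n ℂ)
    (φ : m → ℂ) :
    dotProduct (star φ) ((U * Uᴴ) *ᵥ φ)
      = ∑ t, star ((Uᴴ *ᵥ φ) t) * (Uᴴ *ᵥ φ) t := by
  rw [← Matrix.mulVec_mulVec]
  simp only [dotProduct, Matrix.mulVec, Pi.star_apply, star_sum, StarMul.star_mul,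
    Matrix.conjTranspose_apply, star_star, Finset.sum_mul, Finset.mul_sum]
  rw [Finset.sum_comm]
  refine Finset.sum_congr rfl fun t _ => ?_
  rw [Finset.sum_comm]
  refine Finset.sum_congr rfl fun x _ => Finset.sum_congr rfl fun x1 _ => ?_
  ring

end Aux

/-- If `U : H_S → H_{A₁} ⊗ ⋯ ⊗ H_{A_l}` is an isometry, `ρ` a state
on `H_S` and `σ` a separable state with `‖UρU† − σ‖₁ ≤ δ`, then there are unit vectors
`ψ ∈ H_S`, `φ_i ∈ H_{A_i}`, with `‖U|ψ⟩⟨ψ|U† − |φ₁⟩⟨φ₁| ⊗ ⋯ ⊗ |φ_l⟩⟨φ_l|‖₁ ≤ 4√δ`. -/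
theorem stmt9 {S : Type*} [Fintype S] [DecidableEq S]
    {l : ℕ} {A : Fin l → Type*} [∀ i, Fintype (A i)] [∀ i, DecidableEq (A i)]
    (U : Matrix (∀ i, A i) S ℂ) (hU : Uᴴ * U = 1)
    (ρ : Matrix S S ℂ) (hρ : IsState ρ)
    (σ : Matrix (∀ i, A i) (∀ i, A i) ℂ) (hσ : IsState σ) (hsep : SeparableFamilyState σ)
    (δ : ℝ) (h : traceNorm (U * ρ * Uᴴ - σ) ≤ δ) :
    ∃ (ψ : S → ℂ) (φ : ∀ i, A i → ℂ),
      IsUnitVec ψ ∧ (∀ i, IsUnitVec (φ i)) ∧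
      traceNorm (U * outer ψ * Uᴴ - tensorFamily (fun i => outer (φ i)))
        ≤ 4 * Real.sqrt δ := by
  classical
  obtain ⟨m, p, τ, hp0, hp1, hτstate, hσeq⟩ := hsep
  set Pr : Matrix (∀ i, A i) (∀ i, A i) ℂ := U * Uᴴ with hPrdef
  have hPrherm : Prᴴ = Pr := by
    rw [hPrdef, Matrix.conjTranspose_mul, Matrix.conjTranspose_conjTranspose]
  have hPrsq : Pr * Pr = Pr := by
    rw [hPrdef, Matrix.mul_assoc, ← Matrix.mul_assoc Uᴴ U Uᴴ, hU, Matrix.one_mul]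
  have hPrpsd : Pr.PosSemidef := by
    have := Matrix.posSemidef_conjTranspose_mul_self Uᴴ
    simpa [Matrix.conjTranspose_conjTranspose] using this
  have h1Prpsd : ((1 : Matrix (∀ i, A i) (∀ i, A i) ℂ) - Pr).PosSemidef := by
    have hQherm : ((1 : Matrix (∀ i, A i) (∀ i, A i) ℂ) - Pr)ᴴ = 1 - Pr := by
      rw [Matrix.conjTranspose_sub, Matrix.conjTranspose_one, hPrherm]
    have hid : ((1 : Matrix (∀ i, A i) (∀ i, A i) ℂ) - Pr)ᴴ * (1 - Pr) = 1 - Pr := by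
      rw [hQherm]
      have expand : ((1 : Matrix (∀ i, A i) (∀ i, A i) ℂ) - Pr) * (1 - Pr)
          = 1 - Pr - Pr + Pr * Pr := by noncomm_ring
      rw [expand, hPrsq]
      abel
    have := Matrix.posSemidef_conjTranspose_mul_self
      ((1 : Matrix (∀ i, A i) (∀ i, A i) ℂ) - Pr)
    rwa [hid] at this
  have hTrP : (Pr * (U * ρ * Uᴴ)).trace = 1 := by
    have e1 : Pr * (U * ρ * Uᴴ) = U * ρ * Uᴴ := by
      rw [hPrdef]
      simp only [Matrix.mul_assoc]
      rw [← Matrix.mul_assoc Uᴴ U (ρ * Uᴴ), hU, Matrix.one_mul]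
    rw [e1, Matrix.trace_mul_comm (U * ρ) Uᴴ, ← Matrix.mul_assoc, hU, Matrix.one_mul, hρ.2]
  have hTherm : (U * ρ * Uᴴ - σ).IsHermitian :=
    Matrix.IsHermitian.sub (hρ.1.mul_mul_conjTranspose_same U).1 hσ.1.1
  have hfσ : 1 - δ ≤ ((Pr * σ).trace).re := by
    have h2 := re_trace_contraction_le hPrpsd h1Prpsd hTherm
    rw [Matrix.mul_sub, Matrix.trace_sub, hTrP] at h2
    have h3 := le_trans h2 h
    simp only [Complex.sub_re, Complex.one_re] at h3
    linarith
  have hfsum : ((Pr * σ).trace).re = ∑ y, p y * ((Pr * tensorFamily (τ y)).trace).re := by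
    rw [hσeq, Finset.mul_sum, Matrix.trace_sum, Complex.re_sum]
    refine Finset.sum_congr rfl fun y _ => ?_
    rw [Matrix.mul_smul, Matrix.trace_smul, smul_eq_mul, Complex.re_ofReal_mul]
  obtain ⟨y0, hy0⟩ := exists_ge_weighted p _ hp0 hp1 (1 - δ) (by rw [← hfsum]; exact hfσ)
  choose μ v hμ0 hμ1 hvunit hentry using fun i => state_decomp (And.intro (hτstate y0 i).1 (hτstate y0 i).2)
  have hexp : tensorFamily (τ y0) = ∑ K : ∀ i, A i,
      ((∏ i, μ i (K i) : ℝ) : ℂ) • outer (fun x => ∏ i, v i (K i) (x i)) := by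
    ext x y
    simp only [tensorFamily, Matrix.of_apply, Matrix.sum_apply, Matrix.smul_apply,
      outer, smul_eq_mul]
    calc ∏ i, τ y0 i (x i) (y i)
        = ∏ i, ∑ k, (μ i k : ℂ) * (v i k (x i) * star (v i k (y i))) :=
          Finset.prod_congr rfl fun i _ => hentry i (x i) (y i)
      _ = ∑ K : ∀ i, A i, ∏ i, (μ i (K i) : ℂ) * (v i (K i) (x i) * star (v i (K i) (y i))) :=
          Fintype.prod_sum _
      _ = ∑ K : ∀ i, A i, ((∏ i, μ i (K i) : ℝ) : ℂ)
            * ((∏ i, v i (K i) (x i)) * star (∏ i, v i (K i) (y i))) := by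
          refine Finset.sum_congr rfl fun K _ => ?_
          rw [Finset.prod_mul_distrib, Finset.prod_mul_distrib, star_prod]
          push_cast
          ring
  have hweight : ∑ K : ∀ i, A i, ∏ i, μ i (K i) = 1 := by
    rw [← Fintype.prod_sum fun i k => μ i k]
    exact Finset.prod_eq_one fun i _ => hμ1 i
  have hval : ((Pr * tensorFamily (τ y0)).trace).re
      = ∑ K : ∀ i, A i, (∏ i, μ i (K i))
          * ((Pr * outer (fun z : ∀ i, A i => ∏ i, v i (K i) (z i))).trace).re := by
    rw [hexp, Finset.mul_sum, Matrix.trace_sum, Complex.re_sum]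
    refine Finset.sum_congr rfl fun K _ => ?_
    rw [Matrix.mul_smul, Matrix.trace_smul, smul_eq_mul, Complex.re_ofReal_mul]
  obtain ⟨K0, hK0⟩ := exists_ge_weighted (fun K : ∀ i, A i => ∏ i, μ i (K i)) _
    (fun K => Finset.prod_nonneg fun i _ => hμ0 i (K i)) hweight (1 - δ)
    (by rw [← hval]; exact hy0)
  set φ : ∀ i, A i → ℂ := fun i => v i (K0 i) with hφdef
  have hφunit : ∀ i, IsUnitVec (φ i) := fun i => hvunit i (K0 i)
  set Φ : (∀ i, A i) → ℂ := fun x => ∏ i, φ i (x i) with hΦdef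
  have hΦunit : IsUnitVec Φ := unit_prod φ hφunit
  set w : S → ℂ := Uᴴ *ᵥ Φ with hwdef
  have hdot : (Pr * outer Φ).trace = ∑ t, star (w t) * w t := by
    rw [trace_mul_outer, hPrdef, dot_self_mulVec]
  set c : ℝ := ∑ t, Complex.normSq (w t) with hcdef
  have hsumw : ∑ t, star (w t) * w t = (c : ℂ) := by
    rw [hcdef]
    push_cast
    refine Finset.sum_congr rfl fun t _ => ?_
    rw [Complex.normSq_eq_conj_mul_self, Complex.star_def]
  have hc0 : 0 ≤ c := Finset.sum_nonneg fun t _ => Complex.normSq_nonneg _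
  have hc1 : 1 - δ ≤ c := by
    have : ((Pr * outer Φ).trace).re = c := by rw [hdot, hsumw, Complex.ofReal_re]
    rw [← this]
    exact hK0
  have hcle : c ≤ 1 := by
    have htr1 : (outer Φ).trace = 1 := by
      rw [Matrix.trace]
      have : ∀ x, (outer Φ).diag x = star (Φ x) * Φ x := fun x => by
        simp [outer, Matrix.diag]; ring
      simp_rw [this]
      exact hΦunit
    have hsplit : (Pr * outer Φ).trace
        = (outer Φ).trace - (((1 : Matrix (∀ i, A i) (∀ i, A i) ℂ) - Pr) * outer Φ).trace := by
      rw [Matrix.sub_mul, Matrix.one_mul, Matrix.trace_sub]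
      ring
    have hnn : 0 ≤ ((((1 : Matrix (∀ i, A i) (∀ i, A i) ℂ) - Pr) * outer Φ).trace).re := by
      rw [trace_mul_outer]
      have := h1Prpsd.dotProduct_mulVec_nonneg Φ
      rw [Complex.le_def] at this
      exact this.1
    have : ((Pr * outer Φ).trace).re = c := by rw [hdot, hsumw, Complex.ofReal_re]
    rw [hsplit] at this
    rw [Complex.sub_re, htr1] at this
    simp only [Complex.one_re] at this
    linarith
  have hwinner : ∀ s, (∑ x, star (U x s) * Φ x) = w s := by
    intro s
    rw [hwdef]
    simp [Matrix.mulVec, dotProduct, Matrix.conjTranspose_apply]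
  rcases eq_or_lt_of_le hc0 with hc | hc
  · -- degenerate case : c = 0, hence δ ≥ 1
    have hδ1 : 1 ≤ δ := by linarith
    have hw0 : ∀ t, w t = 0 := by
      intro t
      have := (Finset.sum_eq_zero_iff_of_nonneg
        (fun t _ => Complex.normSq_nonneg (w t))).mp hc.symm t (Finset.mem_univ t)
      exact Complex.normSq_eq_zero.mp this
    have hS : Nonempty S := by
      by_contra hS
      rw [not_nonempty_iff] at hS
      have := hρ.2
      rw [Matrix.trace] at this
      simp [Finset.univ_eq_empty] at this
    obtain ⟨s0⟩ := hS
    refine ⟨Pi.single s0 1, φ, ?_, hφunit, ?_⟩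
    · unfold IsUnitVec
      simp [Pi.single_apply, apply_ite]
    · rw [conj_outer, tensor_outer]
      have hs : ∑ x, star ((U *ᵥ Pi.single s0 1) x) * Φ x = ((0:ℝ):ℂ) := by
        rw [inner_mulVec]
        simp_rw [hwinner, hw0]
        simp
      have heq := traceNorm_outer_sub_outer (U *ᵥ Pi.single s0 1) Φ
        (mulVec_unit hU (by unfold IsUnitVec; simp [Pi.single_apply, apply_ite]))
        hΦunit 0 hs (by norm_num)
      rw [heq]
      have h1 : Real.sqrt (1 - (0:ℝ)^2) = 1 := by norm_num
      rw [h1]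
      have h2 : (1:ℝ) ≤ Real.sqrt δ := Real.one_le_sqrt.mpr hδ1
      linarith
  · -- main case : c > 0
    set r : ℝ := Real.sqrt c with hrdef
    have hr : 0 < r := Real.sqrt_pos.mpr hc
    have hr2 : r ^ 2 = c := Real.sq_sqrt hc0
    set ψ : S → ℂ := fun t => ((r⁻¹:ℝ):ℂ) * w t with hψdef
    have hψsum : ∑ t, star (ψ t) * ψ t = ((r⁻¹ * r⁻¹ * c : ℝ) : ℂ) := by
      have : ∀ t, star (ψ t) * ψ t = ((r⁻¹:ℝ):ℂ) * ((r⁻¹:ℝ):ℂ) * (star (w t) * w t) := by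
        intro t
        rw [hψdef]
        simp only [StarMul.star_mul, Complex.star_def, Complex.conj_ofReal]
        ring
      simp_rw [this]
      rw [← Finset.mul_sum, hsumw]
      push_cast
      ring
    have hψ : IsUnitVec ψ := by
      unfold IsUnitVec
      rw [hψsum]
      have : r⁻¹ * r⁻¹ * c = 1 := by
        rw [← hr2]
        field_simp
      rw [this]
      norm_num
    refine ⟨ψ, φ, hψ, hφunit, ?_⟩
    rw [conj_outer, tensor_outer]
    have hs : ∑ x, star ((U *ᵥ ψ) x) * Φ x = ((r:ℝ):ℂ) := by
      rw [inner_mulVec]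
      simp_rw [hwinner]
      have : ∀ s, star (ψ s) * w s = ((r⁻¹:ℝ):ℂ) * (star (w s) * w s) := by
        intro s
        rw [hψdef]
        simp only [StarMul.star_mul, Complex.star_def, Complex.conj_ofReal]
        ring
      simp_rw [this]
      rw [← Finset.mul_sum, hsumw]
      rw [← Complex.ofReal_mul]
      congr 1
      rw [← hr2]
      field_simp
    have hb := traceNorm_outer_sub_outer (U *ᵥ ψ) Φ (mulVec_unit hU hψ) hΦunit r hs
      (by rw [hr2]; exact hcle)
    rw [hb, hr2]
    have h1 : Real.sqrt (1 - c) ≤ Real.sqrt δ := Real.sqrt_le_sqrt (by linarith)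
    have h2 : 0 ≤ Real.sqrt δ := Real.sqrt_nonneg δ
    linarith
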